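/- The distribution of Y₁ + 2Y₂ + ... + NY_N, where Y_i are i.i.d. Bernoulli(1/2), is symmetric about N(N+1)/4 and unimodal: writing p_k = P(Σ iY_i = k), we have p_k = p_{N(N+1)/2 − k} for all k, and p_k ≤ p_{k+1} whenever k+1 ≤ N(N+1)/4. -/

import Mathlib

open Finset

noncomputable section

/-- `subsetSumCount N k` is the number of subsets `S ⊆ {1, …, N}` with element-sum `k`;
the pmf of `Y₁ + 2Y₂ + ⋯ + N·Y_N` (with `Yᵢ` i.i.d. Bernoulli(1/2)) is
`p_k = subsetSumCount N k / 2^N`. -/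
def subsetSumCount (N : ℕ) (k : ℤ) : ℕ :=
  (univ.filter fun S : Finset (Fin N) => ∑ i ∈ S, ((i : ℤ) + 1) = k).card


namespace WBSU

def canDn (i : ℕ) (S : Finset ℕ) : Prop := i ∈ S ∧ (i = 1 ∨ i - 1 ∉ S)
def canUp (i : ℕ) (S : Finset ℕ) : Prop := i ∉ S ∧ (i = 1 ∨ i - 1 ∈ S)

instance (i : ℕ) (S : Finset ℕ) : Decidable (canDn i S) := inferInstanceAs (Decidable (_ ∧ _))
instance (i : ℕ) (S : Finset ℕ) : Decidable (canUp i S) := inferInstanceAs (Decidable (_ ∧ _))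

def dnSet (i : ℕ) (S : Finset ℕ) : Finset ℕ :=
  if i = 1 then S.erase 1 else insert (i-1) (S.erase i)
def upSet (i : ℕ) (S : Finset ℕ) : Finset ℕ :=
  if i = 1 then insert 1 S else insert i (S.erase (i-1))

lemma dn_up {i : ℕ} {S : Finset ℕ} (h : canDn i S) :
    canUp i (dnSet i S) ∧ upSet i (dnSet i S) = S := by
  obtain ⟨h1, h2⟩ := h
  rcases eq_or_ne i 1 with rfl | hne
  · simp [canUp, dnSet, upSet, Finset.insert_erase h1]
  · have hi1 : i - 1 ∉ S := h2.resolve_left hne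
    have hii : i - 1 ≠ i := by intro h; exact hi1 (by rwa [h])
    refine ⟨?_, ?_⟩
    · simp [canUp, dnSet, if_neg hne, hii, Ne.symm hii, hi1]
    · simp only [upSet, dnSet, if_neg hne]
      rw [Finset.erase_insert (by simp [hi1]), Finset.insert_erase h1]

lemma up_dn {i : ℕ} {S : Finset ℕ} (h : canUp i S) :
    canDn i (upSet i S) ∧ dnSet i (upSet i S) = S := by
  obtain ⟨h1, h2⟩ := h
  rcases eq_or_ne i 1 with rfl | hne
  · simp [canDn, dnSet, upSet, Finset.erase_insert h1]
  · have hi1 : i - 1 ∈ S := h2.resolve_left hne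
    have hii : i - 1 ≠ i := by intro h; exact h1 (by rwa [← h])
    refine ⟨?_, ?_⟩
    · simp [canDn, upSet, if_neg hne, hii, Ne.symm hii, h1]
    · simp only [upSet, dnSet, if_neg hne]
      rw [Finset.erase_insert (by simp [h1]), Finset.insert_erase (by simp [hi1, Ne.symm hii])]


lemma crossIff {i j : ℕ} {S : Finset ℕ} (h0 : 0 ∉ S) (hi : 1 ≤ i) (hj : 1 ≤ j) (hij : i ≠ j) :
    (canDn i S ∧ canUp j (dnSet i S)) ↔ (canUp j S ∧ canDn i (upSet j S)) := by
  simp only [canDn, canUp, dnSet, upSet, Finset.mem_insert, Finset.mem_erase]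
  by_cases h1 : i ∈ S <;> by_cases h2 : j ∈ S <;> by_cases h3 : i-1 ∈ S <;>
    by_cases h4 : j-1 ∈ S <;> by_cases h5 : i = 1 <;> by_cases h6 : j = 1 <;>
    simp_all <;> omega

lemma crossSet {i j : ℕ} {S : Finset ℕ} (h0 : 0 ∉ S) (hi : 1 ≤ i) (hj : 1 ≤ j) (hij : i ≠ j)
    (hL : canDn i S) (hU : canUp j (dnSet i S)) :
    upSet j (dnSet i S) = dnSet i (upSet j S) := by
  simp only [canDn, canUp, dnSet, upSet, Finset.mem_insert, Finset.mem_erase] at hL hU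
  ext x
  simp only [dnSet, upSet, Finset.mem_insert, Finset.mem_erase]
  by_cases h5 : i = 1 <;> by_cases h6 : j = 1 <;> by_cases hx : x ∈ S <;>
    simp_all <;> omega

/-- edge coefficients -/
def gq (N i : ℕ) : ℚ := if i = 1 then (N:ℚ)*((N:ℚ)+1)/2 else ((N:ℚ)+(i:ℚ))*((N:ℚ)+1-(i:ℚ))

lemma gq_succ_self (N : ℕ) : gq N (N+1) = 0 := by
  rcases Nat.eq_zero_or_pos N with rfl | hN
  · simp [gq]
  · have : N + 1 ≠ 1 := by omega
    simp only [gq, if_neg this]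
    push_cast
    ring

lemma gq_sub (N x : ℕ) (hx1 : 1 ≤ x) (hxN : x ≤ N) :
    gq N x - gq N (x+1) = 2*(x:ℚ) + (if x = 1 then -((N:ℚ)*((N:ℚ)+1)/2) else 0) := by
  rcases eq_or_ne x 1 with rfl | hx
  · have h2 : (2:ℕ) ≠ 1 := by omega
    simp only [gq, if_pos rfl, if_neg h2]
    push_cast
    ring
  · have hx1' : x + 1 ≠ 1 := by omega
    simp only [gq, if_neg hx, if_neg hx1', if_neg hx]
    push_cast
    ring

/-- the indicator sum identity -/
lemma sumg (N : ℕ) (S : Finset ℕ) (hS : S ⊆ Icc 1 N) :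
    ∑ i ∈ Icc 1 N, gq N i * ((if canDn i S then (1:ℚ) else 0) - (if canUp i S then (1:ℚ) else 0))
      = 2*((S.sum id : ℕ):ℚ) - (N:ℚ)*((N:ℚ)+1)/2 := by
  rcases Nat.eq_zero_or_pos N with rfl | hN
  · have : S = ∅ := by
      rw [← Finset.subset_empty]; simpa using hS
    subst this
    simp
  have h0 : 0 ∉ S := fun h => by simpa using hS h
  have h1 : (1:ℕ) ∈ Icc 1 N := by rw [Finset.mem_Icc]; omega
  -- pointwise rewrite
  have key : ∀ i ∈ Icc 1 N,
      gq N i * ((if canDn i S then (1:ℚ) else 0) - (if canUp i S then (1:ℚ) else 0))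
      = ((if i ∈ S then gq N i else 0) - (if i-1 ∈ S then gq N i else 0))
        + (if i = 1 then gq N 1 * ((if 1 ∈ S then (1:ℚ) else 0) - 1) else 0) := by
    intro i hi
    rw [Finset.mem_Icc] at hi
    rcases eq_or_ne i 1 with rfl | hne
    · simp only [canDn, canUp, if_pos rfl]
      by_cases hS1 : 1 ∈ S <;> simp [hS1, h0] <;> ring
    · simp only [canDn, canUp, if_neg hne]
      by_cases hA : i ∈ S <;> by_cases hB : i - 1 ∈ S <;>
        simp [hA, hB, hne] <;> ring
  rw [Finset.sum_congr rfl key, Finset.sum_add_distrib, Finset.sum_sub_distrib]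
  -- third sum
  rw [Finset.sum_ite_eq' (Icc 1 N) 1 (fun _ => gq N 1 * ((if 1 ∈ S then (1:ℚ) else 0) - 1)),
    if_pos h1]
  -- first sum
  have hSa : ∑ i ∈ Icc 1 N, (if i ∈ S then gq N i else 0) = ∑ i ∈ S, gq N i := by
    rw [Finset.sum_ite_mem, Finset.inter_eq_right.mpr hS]
  -- second sum : reindex
  have hmap : Icc 1 N = (range N).map ⟨(· + 1), add_left_injective 1⟩ := by
    ext x
    simp only [Finset.mem_map, Function.Embedding.coeFn_mk, Finset.mem_range, Finset.mem_Icc]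
    constructor
    · intro hx; exact ⟨x - 1, by omega, by omega⟩
    · rintro ⟨a, ha, rfl⟩; omega
  have hSb : ∑ i ∈ Icc 1 N, (if i - 1 ∈ S then gq N i else 0)
      = ∑ x ∈ S, gq N (x+1) := by
    rw [hmap, Finset.sum_map]
    simp only [Function.Embedding.coeFn_mk, Nat.add_sub_cancel]
    rw [Finset.sum_ite_mem]
    have hinter : range N ∩ S = S.erase N := by
      ext x
      simp only [Finset.mem_inter, Finset.mem_range, Finset.mem_erase]
      constructor
      · rintro ⟨hx, hxS⟩; exact ⟨by omega, hxS⟩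
      · rintro ⟨hx, hxS⟩
        have := hS hxS; rw [Finset.mem_Icc] at this
        exact ⟨by omega, hxS⟩
    rw [hinter]
    by_cases hNS : N ∈ S
    · rw [← Finset.sum_erase_add S _ hNS, gq_succ_self, add_zero]
    · rw [Finset.erase_eq_of_notMem hNS]
  rw [hSa, hSb, ← Finset.sum_sub_distrib]
  have key2 : ∀ x ∈ S, gq N x - gq N (x+1)
      = 2*(x:ℚ) + (if x = 1 then -((N:ℚ)*((N:ℚ)+1)/2) else 0) := by
    intro x hx
    have := hS hx; rw [Finset.mem_Icc] at this
    exact gq_sub N x this.1 this.2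
  rw [Finset.sum_congr rfl key2, Finset.sum_add_distrib,
    Finset.sum_ite_eq' S 1 (fun _ => -((N:ℚ)*((N:ℚ)+1)/2))]
  have hsum : ∑ x ∈ S, 2*(x:ℚ) = 2*((S.sum id : ℕ):ℚ) := by
    rw [← Finset.mul_sum]
    congr 1
    rw [Nat.cast_sum]
    rfl
  rw [hsum]
  by_cases hS1 : 1 ∈ S <;> simp [hS1, gq] <;> ring



def Eop (N : ℕ) (v : Finset ℕ → ℚ) : Finset ℕ → ℚ := fun S =>
  ∑ i ∈ Icc 1 N, if canDn i S then v (dnSet i S) else 0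

def Fop (N : ℕ) (v : Finset ℕ → ℚ) : Finset ℕ → ℚ := fun S =>
  ∑ i ∈ Icc 1 N, gq N i * (if canUp i S then v (upSet i S) else 0)

lemma ite_sum {c : Prop} [Decidable c] {α : Type*} (s : Finset α) (f : α → ℚ) :
    (if c then ∑ x ∈ s, f x else 0) = ∑ x ∈ s, if c then f x else 0 := by
  split_ifs <;> simp

lemma comm (N : ℕ) (v : Finset ℕ → ℚ) (S : Finset ℕ) (hS : S ⊆ Icc 1 N) :
    Eop N (Fop N v) S - Fop N (Eop N v) S
      = (2*((S.sum id : ℕ):ℚ) - (N:ℚ)*((N:ℚ)+1)/2) * v S := by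
  have h0 : 0 ∉ S := fun h => by simpa using hS h
  have hL : Eop N (Fop N v) S = ∑ i ∈ Icc 1 N, ∑ j ∈ Icc 1 N,
      (if canDn i S then gq N j * (if canUp j (dnSet i S) then v (upSet j (dnSet i S)) else 0)
       else 0) := by
    unfold Eop Fop
    refine Finset.sum_congr rfl fun i _ => ?_
    rw [ite_sum]
  have hR : Fop N (Eop N v) S = ∑ i ∈ Icc 1 N, ∑ j ∈ Icc 1 N,
      (gq N j * if canUp j S then (if canDn i (upSet j S) then v (dnSet i (upSet j S)) else 0)
       else 0) := by
    unfold Eop Fop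
    rw [Finset.sum_comm]
    refine Finset.sum_congr rfl fun j _ => ?_
    by_cases hc : canUp j S
    · simp only [if_pos hc, Finset.mul_sum, mul_ite, mul_zero]
    · simp [if_neg hc]
  rw [hL, hR, ← Finset.sum_sub_distrib]
  have key : ∀ i ∈ Icc 1 N, (∑ j ∈ Icc 1 N,
      (if canDn i S then gq N j * (if canUp j (dnSet i S) then v (upSet j (dnSet i S)) else 0)
       else 0))
      - (∑ j ∈ Icc 1 N,
      (gq N j * if canUp j S then (if canDn i (upSet j S) then v (dnSet i (upSet j S)) else 0)
       else 0))
      = gq N i * ((if canDn i S then (1:ℚ) else 0) - (if canUp i S then (1:ℚ) else 0)) * v S := by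
    intro i hi
    rw [Finset.mem_Icc] at hi
    rw [← Finset.sum_sub_distrib]
    have ptwise : ∀ j ∈ Icc 1 N,
        (if canDn i S then gq N j * (if canUp j (dnSet i S) then v (upSet j (dnSet i S)) else 0)
         else 0)
        - (gq N j * if canUp j S then (if canDn i (upSet j S) then v (dnSet i (upSet j S)) else 0)
         else 0)
        = if j = i then gq N i * ((if canDn i S then (1:ℚ) else 0)
            - (if canUp i S then (1:ℚ) else 0)) * v S else 0 := by
      intro j hj
      rw [Finset.mem_Icc] at hj
      rcases eq_or_ne j i with rfl | hij
      · rw [if_pos rfl]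
        by_cases hd : canDn j S <;> by_cases hu : canUp j S
        · exact absurd hu fun hu => hu.1 hd.1
        · simp [hd, hu, (dn_up hd).1, (dn_up hd).2]
        · simp [hd, hu, (up_dn hu).1, (up_dn hu).2]
        · simp [hd, hu]
      · rw [if_neg hij]
        by_cases hc : canDn i S ∧ canUp j (dnSet i S)
        · have hc' := (crossIff h0 hi.1 hj.1 (Ne.symm hij)).mp ⟨hc.1, hc.2⟩
          rw [crossSet h0 hi.1 hj.1 (Ne.symm hij) hc.1 hc.2] at *
          simp [hc.1, hc.2, hc'.1, hc'.2]
        · have hc' : ¬(canUp j S ∧ canDn i (upSet j S)) :=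
            fun h => hc ((crossIff h0 hi.1 hj.1 (Ne.symm hij)).mpr h)
          rcases not_and_or.mp hc with h | h <;> rcases not_and_or.mp hc' with h' | h' <;>
            simp [h, h']
    rw [Finset.sum_congr rfl ptwise, Finset.sum_ite_eq' (Icc 1 N) i, if_pos (by
      rw [Finset.mem_Icc]; omega)]
  rw [Finset.sum_congr rfl key, ← Finset.sum_mul, sumg N S hS]


def memLevel (N : ℕ) (m : ℤ) (S : Finset ℕ) : Prop :=
  S ⊆ Icc 1 N ∧ ((S.sum id : ℕ) : ℤ) = m

def Supp (N : ℕ) (m : ℤ) (v : Finset ℕ → ℚ) : Prop :=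
  ∀ S, v S ≠ 0 → memLevel N m S

lemma upSet_subset {N i : ℕ} {S : Finset ℕ} (hi : 1 ≤ i) (hiN : i ≤ N) (hS : S ⊆ Icc 1 N) :
    upSet i S ⊆ Icc 1 N := by
  unfold upSet
  split_ifs with h
  · exact Finset.insert_subset (by rw [Finset.mem_Icc]; omega) hS
  · exact Finset.insert_subset (by rw [Finset.mem_Icc]; omega)
      ((Finset.erase_subset _ _).trans hS)

lemma dnSet_subset {N i : ℕ} {S : Finset ℕ} (hi : 1 ≤ i) (hiN : i ≤ N) (hS : S ⊆ Icc 1 N) :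
    dnSet i S ⊆ Icc 1 N := by
  unfold dnSet
  split_ifs with h
  · exact (Finset.erase_subset _ _).trans hS
  · exact Finset.insert_subset (by rw [Finset.mem_Icc]; omega)
      ((Finset.erase_subset _ _).trans hS)

lemma upSet_sum {i : ℕ} {S : Finset ℕ} (hi : 1 ≤ i) (h : canUp i S) :
    (↑((upSet i S).sum id) : ℤ) = ↑(S.sum id) + 1 := by
  obtain ⟨h1, h2⟩ := h
  unfold upSet
  rcases eq_or_ne i 1 with rfl | hne
  · rw [if_pos rfl, Finset.sum_insert h1]
    simp only [id_eq]
    omega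
  · have hi1 : i - 1 ∈ S := h2.resolve_left hne
    have hmem : i ∉ S.erase (i-1) := fun hmm => h1 (Finset.mem_of_mem_erase hmm)
    rw [if_neg hne, Finset.sum_insert hmem]
    have hc : (S.erase (i-1)).sum id + (i-1) = S.sum id := Finset.sum_erase_add S id hi1
    simp only [id_eq] at hc ⊢
    omega

lemma dnSet_sum {i : ℕ} {S : Finset ℕ} (hi : 1 ≤ i) (h : canDn i S) :
    (↑((dnSet i S).sum id) : ℤ) = ↑(S.sum id) - 1 := by
  obtain ⟨h1, h2⟩ := h
  unfold dnSet
  rcases eq_or_ne i 1 with rfl | hne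
  · rw [if_pos rfl]
    have hc : (S.erase 1).sum id + 1 = S.sum id := Finset.sum_erase_add S id h1
    omega
  · have hi1 : i - 1 ∉ S := h2.resolve_left hne
    have hmem : i - 1 ∉ S.erase i := fun hmm => hi1 (Finset.mem_of_mem_erase hmm)
    rw [if_neg hne, Finset.sum_insert hmem]
    have hc : (S.erase i).sum id + i = S.sum id := Finset.sum_erase_add S id h1
    simp only [id_eq] at hc ⊢
    omega

lemma supp_E {N : ℕ} {m : ℤ} {v : Finset ℕ → ℚ} (hv : Supp N m v) :
    Supp N (m+1) (Eop N v) := by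
  intro S hne
  obtain ⟨i, hi, hterm⟩ := Finset.exists_ne_zero_of_sum_ne_zero hne
  rw [Finset.mem_Icc] at hi
  have hcan : canDn i S := by
    by_contra hc; rw [if_neg hc] at hterm; exact hterm rfl
  rw [if_pos hcan] at hterm
  obtain ⟨hX1, hX2⟩ := hv _ hterm
  obtain ⟨hup, heq⟩ := dn_up hcan
  constructor
  · rw [← heq]; exact upSet_subset hi.1 hi.2 hX1
  · rw [← heq, upSet_sum hi.1 hup, hX2]

lemma supp_F {N : ℕ} {m : ℤ} {v : Finset ℕ → ℚ} (hv : Supp N m v) :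
    Supp N (m-1) (Fop N v) := by
  intro S hne
  obtain ⟨i, hi, hterm⟩ := Finset.exists_ne_zero_of_sum_ne_zero hne
  rw [Finset.mem_Icc] at hi
  have hcan : canUp i S := by
    by_contra hc; rw [if_neg hc, mul_zero] at hterm; exact hterm rfl
  rw [if_pos hcan] at hterm
  have hterm' : v (upSet i S) ≠ 0 := by
    intro h; rw [h, mul_zero] at hterm; exact hterm rfl
  obtain ⟨hX1, hX2⟩ := hv _ hterm'
  obtain ⟨hdn, heq⟩ := up_dn hcan
  constructor
  · rw [← heq]; exact dnSet_subset hi.1 hi.2 hX1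
  · rw [← heq, dnSet_sum hi.1 hdn, hX2]

lemma supp_neg {N : ℕ} {m : ℤ} {v : Finset ℕ → ℚ} (hv : Supp N m v) (hm : m < 0) :
    v = fun _ => 0 := by
  funext S
  by_contra hne
  have := (hv S hne).2
  omega

lemma Fop_zero (N : ℕ) : Fop N (fun _ => 0) = fun _ => 0 := by
  funext S; simp [Fop]

lemma Eop_zero (N : ℕ) : Eop N (fun _ => 0) = fun _ => 0 := by
  funext S; simp [Eop]

lemma Fop_smul (N : ℕ) (c : ℚ) (w : Finset ℕ → ℚ) :
    Fop N (fun T => c * w T) = fun S => c * Fop N w S := by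
  funext S
  simp only [Fop, Finset.mul_sum]
  refine Finset.sum_congr rfl fun i _ => ?_
  split_ifs <;> ring

/-- the key sl₂ highest-weight argument -/
lemma main (N k : ℕ) (v : Finset ℕ → ℚ) (hk : 2*(k:ℚ) < (N:ℚ)*((N:ℚ)+1)/2)
    (hv : Supp N (k : ℤ) v) (hE : Eop N v = fun _ => 0) : v = fun _ => 0 := by
  set lam : ℚ := 2*(k:ℚ) - (N:ℚ)*((N:ℚ)+1)/2 with hlamdef
  have hlam : lam < 0 := by rw [hlamdef]; linarith
  set w : ℕ → (Finset ℕ → ℚ) := fun j => (Fop N)^[j] v with hwdef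
  have hw0 : w 0 = v := rfl
  have hwsucc : ∀ j, w (j+1) = Fop N (w j) := fun j => Function.iterate_succ_apply' _ _ _
  have hsupp : ∀ j : ℕ, Supp N ((k:ℤ) - (j:ℤ)) (w j) := by
    intro j
    induction j with
    | zero => simpa [hw0] using hv
    | succ j ih =>
        rw [hwsucc]
        have := supp_F ih
        have he : (k:ℤ) - j - 1 = (k:ℤ) - (j+1 : ℕ) := by push_cast; ring
        rwa [he] at this
  have hE' : ∀ j, Eop N (w (j+1)) = fun S => ((j:ℚ)+1)*(lam - j) * w j S := by
    intro j
    induction j with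
    | zero =>
        rw [hwsucc, hw0]
        funext S
        by_cases hmem : S ⊆ Icc 1 N
        · have hc := comm N v S hmem
          rw [hE, Fop_zero] at hc
          simp only [sub_zero] at hc
          rcases eq_or_ne (v S) 0 with hz | hz
          · rw [hz, mul_zero] at hc ⊢
            exact hc
          · have hsum : ((S.sum id : ℕ) : ℚ) = (k:ℚ) := by
              exact_mod_cast congrArg (fun z : ℤ => (z:ℚ)) (hv S hz).2
            rw [hsum] at hc
            rw [hc, hlamdef]
            push_cast
            ring
        · have h1 : Eop N (Fop N v) S = 0 := by
            by_contra hne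
            exact hmem (supp_E (supp_F hv) S hne).1
          have h2 : v S = 0 := by
            by_contra hne
            exact hmem (hv S hne).1
          rw [h1, h2, mul_zero]
    | succ j ih =>
        funext S
        rw [hwsucc (j+1)]
        by_cases hmem : S ⊆ Icc 1 N
        · have hc := comm N (w (j+1)) S hmem
          rw [ih, Fop_smul] at hc
          have hw2 : Fop N (w j) = w (j+1) := (hwsucc j).symm
          rw [hw2] at hc
          rcases eq_or_ne (w (j+1) S) 0 with hz | hz
          · simp only [hz, mul_zero, sub_zero] at hc
            rw [hz, mul_zero]
            exact hc
          · have hsum : ((S.sum id : ℕ) : ℚ) = (k:ℚ) - ((j:ℚ)+1) := by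
              have h2 := (hsupp (j+1) S hz).2
              have h3 := congrArg (fun z : ℤ => (z:ℚ)) h2
              push_cast at h3 ⊢
              linarith [h3]
            rw [hsum] at hc
            simp only at hc
            have hgoal : ((↑(j+1):ℚ)+1)*(lam - (↑(j+1):ℚ)) * w (j+1) S
                = ((j:ℚ)+1)*(lam-(j:ℚ))*(w (j+1) S)
                  + (2*((k:ℚ)-((j:ℚ)+1)) - (N:ℚ)*((N:ℚ)+1)/2)*(w (j+1) S) := by
              rw [hlamdef]; push_cast; ring
            rw [hgoal]
            linarith [hc]
        · have h1 : Eop N (Fop N (w (j+1))) S = 0 := by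
            by_contra hne
            exact hmem (supp_E (supp_F (hsupp (j+1))) S hne).1
          have h2 : w (j+1) S = 0 := by
            by_contra hne
            exact hmem (hsupp (j+1) S hne).1
          rw [h1, h2, mul_zero]
  have hnonz : ∀ j : ℕ, ((j:ℚ)+1)*(lam - j) ≠ 0 := by
    intro j
    have hj : (0:ℚ) ≤ j := Nat.cast_nonneg j
    have h1 : (0:ℚ) < (j:ℚ)+1 := by linarith
    have h2 : lam - j < 0 := by linarith
    exact mul_ne_zero (ne_of_gt h1) (ne_of_lt h2)
  have htop : w (k+1) = fun _ => 0 := by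
    refine supp_neg (hsupp (k+1)) ?_
    push_cast; omega
  have hdown : ∀ j, w (k+1-j) = fun _ => 0 := by
    intro j
    induction j with
    | zero => rw [Nat.sub_zero]; exact htop
    | succ j ih =>
        rcases Nat.lt_or_ge j (k+1) with hj | hj
        · have he : k+1-j = (k-j)+1 := by omega
          have he2 : k+1-(j+1) = k-j := by omega
          rw [he] at ih
          have hthis := hE' (k-j)
          rw [ih, Eop_zero] at hthis
          rw [he2]
          funext S
          have h5 := congrFun hthis S
          have hnz := hnonz (k-j)
          show w (k-j) S = 0
          rcases mul_eq_zero.mp h5.symm with h6 | h6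
          · exact absurd h6 hnz
          · exact h6
        · have he : k+1-(j+1) = k+1-j := by omega
          rw [he]; exact ih
  have := hdown (k+1)
  simpa [hw0] using this


def level (N m : ℕ) : Finset (Finset ℕ) :=
  ((Icc 1 N).powerset).filter (fun S => S.sum id = m)

lemma mem_level_iff {N m : ℕ} {S : Finset ℕ} :
    S ∈ level N m ↔ S ⊆ Icc 1 N ∧ S.sum id = m := by
  simp [level, Finset.mem_filter, Finset.mem_powerset]

def extFun (N m : ℕ) (u : ↥(level N m) → ℚ) : Finset ℕ → ℚ :=
  fun S => if h : S ∈ level N m then u ⟨S, h⟩ else 0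

lemma supp_ext (N m : ℕ) (u : ↥(level N m) → ℚ) : Supp N (m : ℤ) (extFun N m u) := by
  intro S hne
  unfold extFun at hne
  split_ifs at hne with h
  · obtain ⟨h1, h2⟩ := mem_level_iff.mp h
    exact ⟨h1, by omega⟩
  · exact absurd rfl hne

lemma Eop_addf (N : ℕ) (a b : Finset ℕ → ℚ) :
    Eop N (fun S => a S + b S) = fun S => Eop N a S + Eop N b S := by
  funext S
  simp only [Eop]
  rw [← Finset.sum_add_distrib]
  refine Finset.sum_congr rfl fun i _ => ?_
  split_ifs <;> simp

lemma Eop_smulf (N : ℕ) (c : ℚ) (a : Finset ℕ → ℚ) :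
    Eop N (fun S => c * a S) = fun S => c * Eop N a S := by
  funext S
  simp only [Eop, Finset.mul_sum]
  refine Finset.sum_congr rfl fun i _ => ?_
  split_ifs <;> simp

noncomputable def Phi (N m : ℕ) : (↥(level N m) → ℚ) →ₗ[ℚ] (↥(level N (m+1)) → ℚ) where
  toFun u := fun T => Eop N (extFun N m u) T.1
  map_add' u u' := by
    funext T
    have he : extFun N m (u + u') = fun S => extFun N m u S + extFun N m u' S := by
      funext S
      unfold extFun
      split_ifs <;> simp
    show Eop N (extFun N m (u + u')) T.1
      = Eop N (extFun N m u) T.1 + Eop N (extFun N m u') T.1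
    rw [he, Eop_addf]
  map_smul' c u := by
    funext T
    have he : extFun N m (c • u) = fun S => c * extFun N m u S := by
      funext S
      unfold extFun
      split_ifs <;> simp
    show Eop N (extFun N m (c • u)) T.1 = c * Eop N (extFun N m u) T.1
    rw [he, Eop_smulf]

lemma Phi_zero (N m : ℕ) (u : ↥(level N m) → ℚ)
    (hk : 2*(m:ℚ) < (N:ℚ)*((N:ℚ)+1)/2) (hu : Phi N m u = 0) : u = 0 := by
  have hsupp := supp_ext N m u
  have hEzero : Eop N (extFun N m u) = fun _ => 0 := by
    funext S
    by_cases h : S ∈ level N (m+1)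
    · exact congrFun hu (⟨S, h⟩ : ↥(level N (m+1)))
    · by_contra hne
      obtain ⟨h1, h2⟩ := supp_E hsupp S hne
      exact h (mem_level_iff.mpr ⟨h1, by omega⟩)
  have := main N m (extFun N m u) hk hsupp hEzero
  funext t
  have h5 := congrFun this t.1
  unfold extFun at h5
  rw [dif_pos t.2] at h5
  simpa using h5
lemma card_level_mono (N m : ℕ) (hk : 2*(m:ℚ) < (N:ℚ)*((N:ℚ)+1)/2) :
    (level N m).card ≤ (level N (m+1)).card := by
  have hinj : Function.Injective (Phi N m) := by
    intro u u' h
    have : Phi N m (u - u') = 0 := by rw [map_sub, h, sub_self]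
    have := Phi_zero N m (u - u') hk this
    exact sub_eq_zero.mp this
  have hle := LinearMap.finrank_le_finrank_of_injective hinj
  rw [Module.finrank_fintype_fun_eq_card, Module.finrank_fintype_fun_eq_card,
    Fintype.card_coe, Fintype.card_coe] at hle
  exact hle


lemma count_eq (N m : ℕ) : subsetSumCount N (m : ℤ) = (level N m).card := by
  unfold subsetSumCount
  have hinj : ∀ (S : Finset (Fin N)), ∀ x ∈ S, ∀ y ∈ S, (x:ℕ)+1 = (y:ℕ)+1 → x = y := by
    intro S x _ y _ h
    exact Fin.val_injective (by omega)
  have hsum : ∀ S : Finset (Fin N),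
      (S.image (fun x : Fin N => (x:ℕ)+1)).sum id = ∑ x ∈ S, ((x:ℕ)+1) :=
    fun S => Finset.sum_image (hinj S)
  have hcast : ∀ S : Finset (Fin N),
      (∑ x ∈ S, ((x:ℤ)+1)) = ((∑ x ∈ S, ((x:ℕ)+1) : ℕ) : ℤ) := by
    intro S; push_cast; rfl
  have hright : ∀ T : Finset ℕ, T ⊆ Icc 1 N →
      (univ.filter (fun x : Fin N => (x:ℕ)+1 ∈ T)).image (fun x : Fin N => (x:ℕ)+1) = T := by
    intro T hT
    ext t
    simp only [Finset.mem_image, Finset.mem_filter, Finset.mem_univ, true_and]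
    constructor
    · rintro ⟨x, hx, rfl⟩; exact hx
    · intro ht
      have hb := hT ht
      rw [Finset.mem_Icc] at hb
      refine ⟨⟨t-1, by omega⟩, ?_, ?_⟩
      · show t-1+1 ∈ T
        rwa [Nat.sub_add_cancel hb.1]
      · show t-1+1 = t
        omega
  apply Finset.card_nbij' (i := fun S : Finset (Fin N) => S.image (fun x : Fin N => (x:ℕ)+1))
    (j := fun T : Finset ℕ => univ.filter (fun x : Fin N => (x:ℕ)+1 ∈ T))
  · intro S hS
    simp only [Finset.mem_coe, Finset.mem_filter] at hS
    refine mem_level_iff.mpr ⟨?_, ?_⟩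
    · intro t ht
      rw [Finset.mem_image] at ht
      obtain ⟨x, hx, rfl⟩ := ht
      have := x.2
      rw [Finset.mem_Icc]
      omega
    · rw [hsum]
      have h2 := hS.2
      rw [hcast] at h2
      exact_mod_cast h2
  · intro T hT
    obtain ⟨hT1, hT2⟩ := mem_level_iff.mp hT
    simp only [Finset.mem_coe, Finset.mem_filter]
    refine ⟨Finset.mem_univ _, ?_⟩
    rw [hcast]
    have h3 : (∑ x ∈ univ.filter (fun x : Fin N => (x:ℕ)+1 ∈ T), ((x:ℕ)+1)) = T.sum id := by
      rw [← hsum, hright T hT1]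
    rw [h3, hT2]
  · intro S _
    ext x
    simp only [Finset.mem_filter, Finset.mem_univ, true_and, Finset.mem_image]
    constructor
    · rintro ⟨y, hy, he⟩
      have : y = x := Fin.val_injective (by omega)
      rwa [← this]
    · intro hx; exact ⟨x, hx, rfl⟩
  · intro T hT
    exact hright T (mem_level_iff.mp hT).1

lemma count_neg (N : ℕ) (k : ℤ) (hk : k < 0) : subsetSumCount N k = 0 := by
  unfold subsetSumCount
  rw [Finset.card_eq_zero, Finset.filter_eq_empty_iff]
  intro S _ hs
  have hnn : 0 ≤ ∑ i ∈ S, ((i:ℤ)+1) := Finset.sum_nonneg fun i _ => by positivity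
  omega

end WBSU

/-- The distribution of `Y₁ + 2Y₂ + ⋯ + N·Y_N` is symmetric about `N(N+1)/4` and unimodal:
`p_k = p_{N(N+1)/2 - k}` for all `k`, and `p_k ≤ p_{k+1}` whenever `k + 1 ≤ N(N+1)/4`. -/
theorem weighted_bernoulli_sum_symmetric_unimodal (N : ℕ) :
    (∀ k : ℤ, subsetSumCount N k = subsetSumCount N ((N : ℤ) * (N + 1) / 2 - k))
    ∧ (∀ k : ℤ, 4 * (k + 1) ≤ (N : ℤ) * (N + 1) → subsetSumCount N k ≤ subsetSumCount N (k + 1)) := by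
  have hT : (∑ i : Fin N, ((i:ℤ)+1)) = (N:ℤ)*((N:ℤ)+1)/2 := by
    have h1 : ∑ i : Fin N, ((i:ℤ)+1) = ∑ i ∈ range N, ((i:ℤ)+1) :=
      Fin.sum_univ_eq_sum_range (fun i => (i:ℤ)+1) N
    have h2 : (∑ i ∈ range N, ((i:ℤ)+1)) = ((∑ i ∈ range N, (i+1) : ℕ) : ℤ) := by
      push_cast; rfl
    have h3 : (∑ i ∈ range (N+1), i) = ∑ i ∈ range N, (i+1) := by
      rw [Finset.sum_range_succ' (fun i => i) N]; simp
    have h4 := Finset.sum_range_id_mul_two (N+1)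
    rw [h3] at h4
    have h7 : ((∑ i ∈ range N, (i+1) : ℕ) : ℤ) * 2 = (N:ℤ)*((N:ℤ)+1) := by
      have : ((∑ i ∈ range N, (i+1)) * 2 : ℕ) = (N+1)*N := by simpa using h4
      have hc := congrArg (fun x : ℕ => (x:ℤ)) this
      push_cast at hc
      linarith
    rw [h1, h2]
    omega
  constructor
  · intro k
    unfold subsetSumCount
    apply Finset.card_nbij' (i := fun S => Sᶜ) (j := fun S => Sᶜ)
    · intro S hS
      simp only [Finset.mem_coe, Finset.mem_filter] at hS ⊢
      refine ⟨Finset.mem_univ _, ?_⟩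
      have hc := Finset.sum_add_sum_compl S (fun i : Fin N => ((i:ℤ)+1))
      rw [hT, hS.2] at hc
      omega
    · intro S hS
      simp only [Finset.mem_coe, Finset.mem_filter] at hS ⊢
      refine ⟨Finset.mem_univ _, ?_⟩
      have hc := Finset.sum_add_sum_compl S (fun i : Fin N => ((i:ℤ)+1))
      rw [hT, hS.2] at hc
      omega
    · intro S _; exact compl_compl S
    · intro S _; exact compl_compl S
  · intro k hk
    rcases lt_or_ge k 0 with hneg | hpos
    · rw [WBSU.count_neg N k hneg]
      exact Nat.zero_le _
    · obtain ⟨m, rfl⟩ := Int.eq_ofNat_of_zero_le hpos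
      have hcast : (m:ℤ)+1 = ((m+1 : ℕ) : ℤ) := by push_cast; ring
      rw [hcast, WBSU.count_eq, WBSU.count_eq]
      apply WBSU.card_level_mono
      have hq : 4*((m:ℚ)+1) ≤ (N:ℚ)*((N:ℚ)+1) := by exact_mod_cast hk
      linarith
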